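/- In the space 𝒰 = (Fin 4 → ℝ) of gambles on a four-element possibility space, let 𝒢≥0 := {f : ∀i, f(i) ≥ 0}, v := (−1, 1, −1, 1), M_acc := posi(𝒢≥0 ∪ {v}), E := {0, 1}, I_E := {f : f(0) = 0 and f(1) = 0}, and M_acc⦀E := {f : 1_E·f ∈ M_acc}, where 1_E·f is the gamble equal to f on E and 0 elsewhere. Then: (i) M_acc = {g + α·v : g ∈ 𝒢≥0, α ≥ 0}; (ii) M_acc⦀E = {f : f(0) ≥ 0 and f(1) ≥ 0}; (iii) v ∈ M_acc + I_E but v ∉ M_acc⦀E, so that M_acc + I_E ⊄ M_acc⦀E (the AGM revision axiom BR4, which asks that expansion be included in revision under consistency, fails for conditioning). -/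

import Mathlib

open Pointwise

/-- `posi S`: all strictly positive finite linear combinations of elements of `S`. -/
def posi {V : Type*} [AddCommGroup V] [Module ℝ V] (S : Set V) : Set V :=
  {u | ∃ n : ℕ, 0 < n ∧ ∃ (lam : Fin n → ℝ) (w : Fin n → V),
    (∀ k, 0 < lam k) ∧ (∀ k, w k ∈ S) ∧ u = ∑ k, lam k • w k}

/-- The nonnegative gambles on a four-element possibility space. -/
def Gge0 : Set (Fin 4 → ℝ) := {f | ∀ i, 0 ≤ f i}

/-- The gamble `(−1, 1, −1, 1)`. -/
def vG : Fin 4 → ℝ := ![-1, 1, -1, 1]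

/-- The set of acceptable gambles of the counterexample. -/
def MaccEx : Set (Fin 4 → ℝ) := posi (Gge0 ∪ {vG})

/-- The conditioning event `E = {0, 1}`. -/
def E7 : Set (Fin 4) := {0, 1}

/-- The kernel `I_E` of the calling-off operation associated with `E`. -/
def IE7 : Set (Fin 4 → ℝ) := {f | f 0 = 0 ∧ f 1 = 0}

/-- `M_acc⦀E`: gambles whose called-off version `1_E·f` is acceptable. -/
def MaccCondE : Set (Fin 4 → ℝ) := {f | E7.indicator f ∈ MaccEx}

lemma posi_subset {V : Type*} [AddCommGroup V] [Module ℝ V] {S T : Set V}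
    (hST : S ⊆ T) (hadd : ∀ a ∈ T, ∀ b ∈ T, a + b ∈ T)
    (hsmul : ∀ c : ℝ, 0 < c → ∀ a ∈ T, c • a ∈ T) : posi S ⊆ T := by
  have aux : ∀ n (lam : Fin (n+1) → ℝ) (w : Fin (n+1) → V), (∀ k, 0 < lam k) →
      (∀ k, w k ∈ S) → ∑ k, lam k • w k ∈ T := by
    intro n
    induction n with
    | zero =>
      intro lam w hl hw
      simpa using hsmul _ (hl 0) _ (hST (hw 0))
    | succ n ih =>
      intro lam w hl hw
      rw [Fin.sum_univ_succ]
      exact hadd _ (hsmul _ (hl 0) _ (hST (hw 0))) _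
        (ih _ _ (fun k => hl k.succ) (fun k => hw k.succ))
  rintro u ⟨n, hn, lam, w, hl, hw, rfl⟩
  obtain ⟨m, rfl⟩ := Nat.exists_eq_succ_of_ne_zero hn.ne'
  exact aux m lam w hl hw

lemma part1 : MaccEx = {g | ∃ h ∈ Gge0, ∃ α : ℝ, 0 ≤ α ∧ g = h + α • vG} := by
  apply Set.Subset.antisymm
  · apply posi_subset
    · rintro u (hu | hu)
      · exact ⟨u, hu, 0, le_refl 0, by simp⟩
      · rw [Set.mem_singleton_iff] at hu
        subst hu
        exact ⟨0, fun i => le_refl 0, 1, zero_le_one, by simp⟩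
    · rintro a ⟨h1, hh1, α1, hα1, rfl⟩ b ⟨h2, hh2, α2, hα2, rfl⟩
      exact ⟨h1 + h2, fun i => add_nonneg (hh1 i) (hh2 i), α1 + α2, by linarith,
        by rw [add_smul]; abel⟩
    · rintro c hc a ⟨h, hh, α, hα, rfl⟩
      refine ⟨c • h, ?_, c * α, mul_nonneg hc.le hα, by rw [smul_add, smul_smul]⟩
      intro i
      simp only [Pi.smul_apply, smul_eq_mul]
      exact mul_nonneg hc.le (hh i)
  · rintro g ⟨h, hh, α, hα, rfl⟩
    rcases hα.eq_or_lt with h0 | h0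
    · refine ⟨1, one_pos, fun _ => 1, fun _ => h, fun _ => one_pos,
        fun _ => Or.inl hh, ?_⟩
      simp [← h0]
    · refine ⟨2, two_pos, ![1, α], ![h, vG], ?_, ?_, ?_⟩
      · intro k; fin_cases k <;> simp [h0]
      · intro k; fin_cases k
        · exact Or.inl hh
        · exact Or.inr rfl
      · rw [Fin.sum_univ_two]; simp

lemma vG_mem : vG ∈ MaccEx :=
  ⟨1, one_pos, fun _ => 1, fun _ => vG, fun _ => one_pos, fun _ => Or.inr rfl, by simp⟩

lemma part2 : MaccCondE = {f | 0 ≤ f 0 ∧ 0 ≤ f 1} := by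
  have m0 : (0 : Fin 4) ∈ E7 := Set.mem_insert 0 {1}
  have m1 : (1 : Fin 4) ∈ E7 := Or.inr rfl
  have m3 : (3 : Fin 4) ∉ E7 := by simp [E7]
  ext f
  simp only [MaccCondE, Set.mem_setOf_eq, part1]
  constructor
  · rintro ⟨h, hh, α, hα, heq⟩
    have h0 := congrFun heq 0
    have h1 := congrFun heq 1
    have h3 := congrFun heq 3
    rw [Set.indicator_of_mem m0] at h0
    rw [Set.indicator_of_mem m1] at h1
    rw [Set.indicator_of_notMem m3] at h3
    simp only [Pi.add_apply, Pi.smul_apply, smul_eq_mul, vG] at h0 h1 h3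
    norm_num at h0 h1 h3
    rw [show (![-1, 1, -1, 1] : Fin 4 → ℝ) 3 = 1 from rfl] at h3
    have := hh 0
    have := hh 1
    have := hh 3
    constructor <;> linarith
  · rintro ⟨hf0, hf1⟩
    refine ⟨E7.indicator f, ?_, 0, le_refl 0, by simp⟩
    exact Set.indicator_nonneg (by rintro a (rfl | rfl) <;> assumption)

theorem stmt7 :
    MaccEx = {g | ∃ h ∈ Gge0, ∃ α : ℝ, 0 ≤ α ∧ g = h + α • vG} ∧
    MaccCondE = {f | 0 ≤ f 0 ∧ 0 ≤ f 1} ∧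
    vG ∈ MaccEx + IE7 ∧ vG ∉ MaccCondE ∧ ¬ MaccEx + IE7 ⊆ MaccCondE := by
  have hvmem : vG ∈ MaccEx + IE7 := by
    simpa using Set.add_mem_add vG_mem (show (0 : Fin 4 → ℝ) ∈ IE7 from ⟨rfl, rfl⟩)
  have hvnot : vG ∉ MaccCondE := by
    rw [part2]
    simp [vG]
  exact ⟨part1, part2, hvmem, hvnot, fun hsub => hvnot (hsub hvmem)⟩
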